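/- arXiv:1709.08495 — 3 statements merged into one kernel-verified Lean document; each statement's English description precedes it below -/
import Mathlib

section
/- Let a ∈ (0,1/2]. The three functions φ₁(t,θ) := -(z_a'(t)/x_a(t))·cos θ, φ₂(t,θ) := -(z_a'(t)/x_a(t))·sin θ and φ₃(t,θ) := x_a'(t)/x_a(t) — which are the three components of the Gauss map N_a = (∂_t X_a × ∂_θ X_a)/|∂_t X_a × ∂_θ X_a| of the conformal unduloid parametrization X_a(t,θ) = (x_a(t)cos θ, x_a(t)sin θ, z_a(t)) — each satisfy the Jacobi equation ∂_{tt}φ + ∂_{θθ}φ + 2p_a·φ = 0 on ℝ². -/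
noncomputable section

open Real Set

/-- Cross product in ℝ³. -/
def cross3 (v w : Fin 3 → ℝ) : Fin 3 → ℝ :=
  ![v 1 * w 2 - v 2 * w 1, v 2 * w 0 - v 0 * w 2, v 0 * w 1 - v 1 * w 0]

/-- Dot product in ℝ³. -/
def dot3 (v w : Fin 3 → ℝ) : ℝ := v 0 * w 0 + v 1 * w 1 + v 2 * w 2

/-- Euclidean norm in ℝ³. -/
def norm3 (v : Fin 3 → ℝ) : ℝ := Real.sqrt (dot3 v v)

/-- Partial derivative in the first variable of a curried map into ℝ³. -/
def Dt3 (Y : ℝ → ℝ → Fin 3 → ℝ) : ℝ → ℝ → Fin 3 → ℝ :=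
  fun t θ i => deriv (fun s => Y s θ i) t

/-- Partial derivative in the second variable of a curried map into ℝ³. -/
def Dth3 (Y : ℝ → ℝ → Fin 3 → ℝ) : ℝ → ℝ → Fin 3 → ℝ :=
  fun t θ i => deriv (fun s => Y t s i) θ

/-- Gauss map (unit normal) of a parametrized surface. -/
def gauss3 (Y : ℝ → ℝ → Fin 3 → ℝ) : ℝ → ℝ → Fin 3 → ℝ :=
  fun t θ i => cross3 (Dt3 Y t θ) (Dth3 Y t θ) i / norm3 (cross3 (Dt3 Y t θ) (Dth3 Y t θ))

/-- Mean curvature of a parametrized surface (Gaussian notation). -/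
def meanCurv (Y : ℝ → ℝ → Fin 3 → ℝ) (t θ : ℝ) : ℝ :=
  (dot3 (Dt3 Y t θ) (Dt3 Y t θ) * dot3 (Dth3 (Dth3 Y) t θ) (gauss3 Y t θ)
    - 2 * dot3 (Dt3 Y t θ) (Dth3 Y t θ) * dot3 (Dth3 (Dt3 Y) t θ) (gauss3 Y t θ)
    + dot3 (Dth3 Y t θ) (Dth3 Y t θ) * dot3 (Dt3 (Dt3 Y) t θ) (gauss3 Y t θ))
  / (2 * (dot3 (Dt3 Y t θ) (Dt3 Y t θ) * dot3 (Dth3 Y t θ) (Dth3 Y t θ)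
      - dot3 (Dt3 Y t θ) (Dth3 Y t θ) ^ 2))

/-- `x` is the unduloid profile function with neck-size `a`. -/
def IsUnduloid (a : ℝ) (x : ℝ → ℝ) : Prop :=
  ContDiff ℝ 2 x ∧
  (∀ t, deriv (deriv x) t = (1 - 2 * (a * (1 - a))) * x t - 2 * (x t) ^ 3) ∧
  x 0 = 1 - a ∧ deriv x 0 = 0

/-- The height function `z_a`. -/
def zshape (a : ℝ) (x : ℝ → ℝ) : ℝ → ℝ :=
  fun t => ∫ s in (0:ℝ)..t, (a * (1 - a) + x s ^ 2)

/-- `T` is the minimal (positive) period of `x`. -/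
def IsMinPeriod (x : ℝ → ℝ) (T : ℝ) : Prop :=
  0 < T ∧ Function.Periodic x T ∧ ∀ T', 0 < T' → Function.Periodic x T' → T ≤ T'

/-- The potential of the Jacobi operator. -/
def pfun (a : ℝ) (x : ℝ → ℝ) : ℝ → ℝ :=
  fun t => x t ^ 2 + (a * (1 - a)) ^ 2 / x t ^ 2

/-- `ψ` is the even solution of `ψ'' + 2 p_a ψ = 0`, `ψ(0)=1`, `ψ'(0)=0`. -/
def IsPsi0 (a : ℝ) (x : ℝ → ℝ) (ψ : ℝ → ℝ) : Prop :=
  ContDiff ℝ 2 ψ ∧ (∀ t, deriv (deriv ψ) t + 2 * pfun a x t * ψ t = 0) ∧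
  ψ 0 = 1 ∧ deriv ψ 0 = 0

/-- The generalized toroidal unduloid parametrization `X_{ε,a}`. -/
def Xtor (x z : ℝ → ℝ) (ε : ℝ) : ℝ → ℝ → Fin 3 → ℝ :=
  fun t θ =>
    ![x t * Real.cos θ,
      (ε⁻¹ + x t * Real.sin θ) * Real.cos (ε * z t),
      (ε⁻¹ + x t * Real.sin θ) * Real.sin (ε * z t)]

/-- Normal graph over a parametrized surface. -/
def normalGraph (X : ℝ → ℝ → Fin 3 → ℝ) (φ : ℝ → ℝ → ℝ) : ℝ → ℝ → Fin 3 → ℝ :=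
  fun t θ i => X t θ i + φ t θ * gauss3 X t θ i

/-- Rotation of angle σ about the x₁-axis. -/
def rot1 (σ : ℝ) (v : Fin 3 → ℝ) : Fin 3 → ℝ :=
  ![v 0, Real.cos σ * v 1 - Real.sin σ * v 2, Real.sin σ * v 1 + Real.cos σ * v 2]

/-- Partial derivative in `t` of a scalar function. -/
def dt (f : ℝ → ℝ → ℝ) : ℝ → ℝ → ℝ := fun t θ => deriv (fun s => f s θ) t

/-- Partial derivative in `θ` of a scalar function. -/
def dth (f : ℝ → ℝ → ℝ) : ℝ → ℝ → ℝ := fun t θ => deriv (fun s => f t s) θ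

/-- Global α-Hölder continuity of a scalar function on ℝ². -/
def Holder2 (α : ℝ) (f : ℝ → ℝ → ℝ) : Prop :=
  ∃ C : ℝ, ∀ p q : ℝ × ℝ, |f p.1 p.2 - f q.1 q.2| ≤ C * dist p q ^ α

/-- Membership in the space 𝒳_a of C^{2,α} doubly periodic symmetric functions. -/
def MemX (α τ : ℝ) (φ : ℝ → ℝ → ℝ) : Prop :=
  ContDiff ℝ 2 (fun p : ℝ × ℝ => φ p.1 p.2) ∧
  Holder2 α (dt (dt φ)) ∧ Holder2 α (dth (dt φ)) ∧ Holder2 α (dth (dth φ)) ∧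
  (∀ θ, Function.Periodic (fun t => φ t θ) (2 * τ)) ∧
  (∀ t, Function.Periodic (fun θ => φ t θ) (2 * Real.pi)) ∧
  (∀ t θ, φ (-t) θ = φ t θ) ∧
  (∀ t θ, φ t (Real.pi / 2 - θ) = φ t (Real.pi / 2 + θ))

/-- Membership in the space 𝒴_a of C^{0,α} doubly periodic symmetric functions. -/
def MemY (α τ : ℝ) (f : ℝ → ℝ → ℝ) : Prop :=
  Continuous (fun p : ℝ × ℝ => f p.1 p.2) ∧ Holder2 α f ∧
  (∀ θ, Function.Periodic (fun t => f t θ) (2 * τ)) ∧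
  (∀ t, Function.Periodic (fun θ => f t θ) (2 * Real.pi)) ∧
  (∀ t θ, f (-t) θ = f t θ) ∧
  (∀ t θ, f t (Real.pi / 2 - θ) = f t (Real.pi / 2 + θ))

/-- Integral over the fundamental rectangle Q_τ = [-τ,τ]×[-π,π]. -/
def intQ (τ : ℝ) (f : ℝ → ℝ → ℝ) : ℝ :=
  ∫ t in (-τ)..τ, ∫ θ in (-Real.pi)..Real.pi, f t θ

/-- The strip [s-δ, s+δ] × [-π,π]. -/
def strip (δ s : ℝ) : Set (ℝ × ℝ) :=
  Set.Icc (s - δ) (s + δ) ×ˢ Set.Icc (-Real.pi) Real.pi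

/-- Sup norm of a scalar function on a set. -/
def supOn (S : Set (ℝ × ℝ)) (g : ℝ → ℝ → ℝ) : ℝ :=
  sSup ((fun p : ℝ × ℝ => |g p.1 p.2|) '' S)

/-- α-Hölder seminorm of a scalar function on a set. -/
def holdOn (α : ℝ) (S : Set (ℝ × ℝ)) (g : ℝ → ℝ → ℝ) : ℝ :=
  sSup {r : ℝ | ∃ p ∈ S, ∃ q ∈ S, p ≠ q ∧ r = |g p.1 p.2 - g q.1 q.2| / dist p q ^ α}

/-- C^{0,α} norm on a set. -/
def c0αOn (α : ℝ) (S : Set (ℝ × ℝ)) (g : ℝ → ℝ → ℝ) : ℝ :=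
  supOn S g + holdOn α S g

/-- C^{2,α} norm on a set. -/
def c2αOn (α : ℝ) (S : Set (ℝ × ℝ)) (g : ℝ → ℝ → ℝ) : ℝ :=
  c0αOn α S g + c0αOn α S (dt g) + c0αOn α S (dth g)
    + c0αOn α S (dt (dt g)) + c0αOn α S (dth (dt g)) + c0αOn α S (dth (dth g))

/-- Weighted norm ‖f‖_{a,0,μ}. -/
def wnorm0 (α δ μ : ℝ) (x : ℝ → ℝ) (f : ℝ → ℝ → ℝ) : ℝ :=
  sSup {r : ℝ | ∃ s : ℝ, r = x s ^ (-μ) * c0αOn α (strip δ s) f}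

/-- Weighted norm ‖f‖_{a,2,μ}. -/
def wnorm2 (α δ μ : ℝ) (x : ℝ → ℝ) (f : ℝ → ℝ → ℝ) : ℝ :=
  sSup {r : ℝ | ∃ s : ℝ, r = x s ^ (-μ) * c2αOn α (strip δ s) f}


/-- Lemma 4.1: the components of the Gauss map of the unduloid
satisfy the Jacobi equation. -/
theorem statement12 (a : ℝ) (ha : a ∈ Set.Ioc (0:ℝ) (1/2)) (x : ℝ → ℝ)
    (hx : IsUnduloid a x) :
    let z := zshape a x
    let φ₁ : ℝ → ℝ → ℝ := fun t θ => -(deriv z t / x t) * Real.cos θ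
    let φ₂ : ℝ → ℝ → ℝ := fun t θ => -(deriv z t / x t) * Real.sin θ
    let φ₃ : ℝ → ℝ → ℝ := fun t _ => deriv x t / x t
    (∀ t θ, dt (dt φ₁) t θ + dth (dth φ₁) t θ + 2 * pfun a x t * φ₁ t θ = 0) ∧
    (∀ t θ, dt (dt φ₂) t θ + dth (dth φ₂) t θ + 2 * pfun a x t * φ₂ t θ = 0) ∧
    (∀ t θ, dt (dt φ₃) t θ + dth (dth φ₃) t θ + 2 * pfun a x t * φ₃ t θ = 0) := by
  obtain ⟨hcd, hode, hx0, hdx0⟩ := hx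
  obtain ⟨ha0, ha2⟩ := ha
  have hcd2 : ContDiff ℝ (1+1) x := by norm_num; exact hcd
  obtain ⟨hdiff, -, hcd1⟩ := contDiff_succ_iff_deriv.mp hcd2
  have hdiff' : Differentiable ℝ (deriv x) := hcd1.differentiable one_ne_zero
  have hx' : ∀ t, HasDerivAt x (deriv x t) t := fun t => (hdiff t).hasDerivAt
  have hx'' : ∀ t, HasDerivAt (deriv x)
      ((1 - 2 * (a * (1 - a))) * x t - 2 * (x t) ^ 3) t :=
    fun t => hode t ▸ (hdiff' t).hasDerivAt
  have hEc : ∀ t, HasDerivAt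
      (fun s => deriv x s ^ 2 + x s ^ 4 - (1 - 2 * (a * (1 - a))) * x s ^ 2) 0 t := by
    intro t
    have h := (((hx'' t).fun_pow 2).fun_add ((hx' t).fun_pow 4)).fun_sub
      (((hx' t).fun_pow 2).const_mul (1 - 2 * (a * (1 - a))))
    refine h.congr_deriv (Eq.symm ?_)
    push_cast
    ring
  have hE : ∀ t, deriv x t ^ 2
      = (1 - 2 * (a * (1 - a))) * x t ^ 2 - x t ^ 4 - (a * (1 - a)) ^ 2 := by
    intro t
    have h := is_const_of_deriv_eq_zero (f := fun s =>
        deriv x s ^ 2 + x s ^ 4 - (1 - 2 * (a * (1 - a))) * x s ^ 2)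
      (fun s => (hEc s).differentiableAt) (fun s => (hEc s).deriv) t 0
    simp only [hx0, hdx0] at h
    linear_combination h
  have hx2 : ∀ t, a ^ 2 ≤ x t ^ 2 := by
    intro t
    by_contra h
    push_neg at h
    nlinarith [hE t, sq_nonneg (deriv x t)]
  have hxne : ∀ t, x t ≠ 0 := by
    intro t h
    have := hx2 t
    rw [h] at this
    nlinarith
  have hxpos : ∀ t, 0 < x t := by
    intro t
    by_contra h
    push_neg at h
    have h1 : (0:ℝ) ∈ Set.uIcc (x t) (x 0) :=
      Set.mem_uIcc.2 (Or.inl ⟨h, by rw [hx0]; linarith⟩)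
    obtain ⟨s, -, hs⟩ := intermediate_value_uIcc hcd.continuous.continuousOn h1
    exact hxne s hs
  have hz : ∀ t, deriv (zshape a x) t = a * (1 - a) + x t ^ 2 := by
    intro t
    exact Continuous.deriv_integral _
      (continuous_const.add (hcd.continuous.pow 2)) 0 t
  have hw : ∀ s, HasDerivAt (fun u => (a * (1 - a) + x u ^ 2) / x u)
      (deriv x s * (x s ^ 2 - a * (1 - a)) / x s ^ 2) s := by
    intro s
    have h := (((hx' s).fun_pow 2).const_add (a * (1 - a))).fun_div (hx' s) (hxne s)
    refine h.congr_deriv (Eq.symm ?_)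
    push_cast
    field_simp
    ring
  have hw2 : ∀ s, HasDerivAt (fun u => deriv x u * (x u ^ 2 - a * (1 - a)) / x u ^ 2)
      ((1 - 2 * pfun a x s) * ((a * (1 - a) + x s ^ 2) / x s)) s := by
    intro s
    have h := ((hx'' s).fun_mul (((hx' s).fun_pow 2).sub_const (a * (1 - a)))).fun_div
      ((hx' s).fun_pow 2) (pow_ne_zero 2 (hxne s))
    refine h.congr_deriv (Eq.symm ?_)
    have hEs := hE s
    have hq := hxne s
    push_cast
    unfold pfun
    field_simp [pfun]
    linear_combination (-(2 * (a * (1 - a)))) * hEs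
  have hv : ∀ s, HasDerivAt (fun u => deriv x u / x u)
      ((((1 - 2 * (a * (1 - a))) * x s - 2 * (x s) ^ 3) * x s
        - deriv x s * deriv x s) / x s ^ 2) s :=
    fun s => (hx'' s).div (hx' s) (hxne s)
  have hv2 : ∀ s, HasDerivAt (fun u =>
      (((1 - 2 * (a * (1 - a))) * x u - 2 * (x u) ^ 3) * x u
        - deriv x u * deriv x u) / x u ^ 2)
      (-(2 * pfun a x s) * (deriv x s / x s)) s := by
    intro s
    have hnum : HasDerivAt (fun u =>
        ((1 - 2 * (a * (1 - a))) * x u - 2 * (x u) ^ 3) * x u - deriv x u * deriv x u)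
        ((((1 - 2 * (a * (1 - a))) * deriv x s - 2 * (3 * x s ^ 2 * deriv x s)) * x s
          + ((1 - 2 * (a * (1 - a))) * x s - 2 * (x s) ^ 3) * deriv x s)
          - (((1 - 2 * (a * (1 - a))) * x s - 2 * (x s) ^ 3) * deriv x s
            + deriv x s * ((1 - 2 * (a * (1 - a))) * x s - 2 * (x s) ^ 3))) s := by
      have h := ((((hx' s).const_mul (1 - 2 * (a * (1 - a)))).fun_sub
        (((hx' s).fun_pow 3).const_mul 2)).fun_mul (hx' s)).fun_sub ((hx'' s).fun_mul (hx'' s))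
      refine h.congr_deriv (Eq.symm ?_)
      all_goals (push_cast; ring)
    have h := hnum.fun_div ((hx' s).fun_pow 2) (pow_ne_zero 2 (hxne s))
    refine h.congr_deriv (Eq.symm ?_)
    have hEs := hE s
    have hq := hxne s
    push_cast
    unfold pfun
    field_simp [pfun]
    linear_combination (-(2 * deriv x s)) * hEs
  intro z φ₁ φ₂ φ₃
  have hzt : ∀ t, deriv z t = a * (1 - a) + x t ^ 2 := hz
  refine ⟨fun t θ => ?_, fun t θ => ?_, fun t θ => ?_⟩
  · have e1 : (fun s => dt φ₁ s θ)
        = fun s => -(deriv x s * (x s ^ 2 - a * (1 - a)) / x s ^ 2) * Real.cos θ := by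
      funext s
      show deriv (fun u => -(deriv z u / x u) * Real.cos θ) s = _
      have heq : (fun u => -(deriv z u / x u) * Real.cos θ)
          = fun u => -((a * (1 - a) + x u ^ 2) / x u) * Real.cos θ := by
        funext u
        rw [hzt u]
      rw [heq]
      exact (((hw s).neg).mul_const _).deriv
    have d1 : dt (dt φ₁) t θ
        = -((1 - 2 * pfun a x t) * ((a * (1 - a) + x t ^ 2) / x t)) * Real.cos θ := by
      show deriv (fun s => dt φ₁ s θ) t = _
      rw [e1]
      exact (((hw2 t).neg).mul_const _).deriv
    have e2 : (fun u => dth φ₁ t u)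
        = fun u => -(deriv z t / x t) * (-Real.sin u) := by
      funext u
      show deriv (fun v => -(deriv z t / x t) * Real.cos v) u = _
      exact ((Real.hasDerivAt_cos u).const_mul _).deriv
    have d2 : dth (dth φ₁) t θ = -(deriv z t / x t) * (-Real.cos θ) := by
      show deriv (fun u => dth φ₁ t u) θ = _
      rw [e2]
      have h := ((Real.hasDerivAt_sin θ).neg).const_mul (-(deriv z t / x t))
      exact h.deriv
    rw [d1, d2]
    show _ + _ + 2 * pfun a x t * (-(deriv z t / x t) * Real.cos θ) = 0
    rw [hzt t]
    ring
  · have e1 : (fun s => dt φ₂ s θ)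
        = fun s => -(deriv x s * (x s ^ 2 - a * (1 - a)) / x s ^ 2) * Real.sin θ := by
      funext s
      show deriv (fun u => -(deriv z u / x u) * Real.sin θ) s = _
      have heq : (fun u => -(deriv z u / x u) * Real.sin θ)
          = fun u => -((a * (1 - a) + x u ^ 2) / x u) * Real.sin θ := by
        funext u
        rw [hzt u]
      rw [heq]
      exact (((hw s).neg).mul_const _).deriv
    have d1 : dt (dt φ₂) t θ
        = -((1 - 2 * pfun a x t) * ((a * (1 - a) + x t ^ 2) / x t)) * Real.sin θ := by
      show deriv (fun s => dt φ₂ s θ) t = _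
      rw [e1]
      exact (((hw2 t).neg).mul_const _).deriv
    have e2 : (fun u => dth φ₂ t u)
        = fun u => -(deriv z t / x t) * Real.cos u := by
      funext u
      show deriv (fun v => -(deriv z t / x t) * Real.sin v) u = _
      exact ((Real.hasDerivAt_sin u).const_mul _).deriv
    have d2 : dth (dth φ₂) t θ = -(deriv z t / x t) * (-Real.sin θ) := by
      show deriv (fun u => dth φ₂ t u) θ = _
      rw [e2]
      exact ((Real.hasDerivAt_cos θ).const_mul _).deriv
    rw [d1, d2]
    show _ + _ + 2 * pfun a x t * (-(deriv z t / x t) * Real.sin θ) = 0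
    rw [hzt t]
    ring
  · have e1 : (fun s => dt φ₃ s θ)
        = fun s => (((1 - 2 * (a * (1 - a))) * x s - 2 * (x s) ^ 3) * x s
          - deriv x s * deriv x s) / x s ^ 2 := by
      funext s
      show deriv (fun u => deriv x u / x u) s = _
      exact (hv s).deriv
    have d1 : dt (dt φ₃) t θ = -(2 * pfun a x t) * (deriv x t / x t) := by
      show deriv (fun s => dt φ₃ s θ) t = _
      rw [e1]
      exact (hv2 t).deriv
    have e2 : (fun u => dth φ₃ t u) = fun _ => (0:ℝ) := by
      funext u
      show deriv (fun _ => deriv x t / x t) u = _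
      exact deriv_const _ _
    have d2 : dth (dth φ₃) t θ = 0 := by
      show deriv (fun u => dth φ₃ t u) θ = _
      rw [e2]
      exact deriv_const _ _
    rw [d1, d2]
    show _ + _ + 2 * pfun a x t * (deriv x t / x t) = 0
    ring

end
end

section
/- Let a ∈ (0,1/4) and set w_a := z_a'/x_a. Then: (i) w_a'' = (1 + 4γ_a)·w_a - 2w_a³ and (w_a')² = (1 - w_a²)(w_a² - 4γ_a) on ℝ; (ii) 0 < w_a ≤ 1, w_a(0) = 1, w_a is even and τ_a-periodic; (iii) the minimum of w_a equals 2√(γ_a) and is attained at t = τ_a/2, and x_a(τ_a/2)² = γ_a. -/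
noncomputable section

open Real Set

lemma cd_facts {f : ℝ → ℝ} (hf : ContDiff ℝ 2 f) :
    Differentiable ℝ f ∧ Differentiable ℝ (deriv f) ∧ Continuous (deriv (deriv f)) := by
  have h2 : ContDiff ℝ ((1:ℕ) + 1) f := by norm_num [hf]
  rw [contDiff_succ_iff_deriv] at h2
  obtain ⟨h1, -, h3⟩ := h2
  have h3' : ContDiff ℝ ((0:ℕ) + 1) (deriv f) := by exact_mod_cast h3
  rw [contDiff_succ_iff_deriv] at h3'
  exact ⟨h1, h3'.1, (h3'.2.2.continuous)⟩

lemma ode_uniq {c : ℝ} (hc : |c| ≤ 1) {f g : ℝ → ℝ}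
    (hf : ContDiff ℝ 2 f) (hg : ContDiff ℝ 2 g)
    (hf' : ∀ t, deriv (deriv f) t = c * f t - 2 * f t ^ 3)
    (hg' : ∀ t, deriv (deriv g) t = c * g t - 2 * g t ^ 3)
    (hfb : ∀ t, |f t| ≤ 1) (hgb : ∀ t, |g t| ≤ 1)
    (h0 : f 0 = g 0) (h0' : deriv f 0 = deriv g 0) :
    ∀ t, f t = g t := by
  intro t
  set v : ℝ → ℝ × ℝ → ℝ × ℝ := fun _ p => (p.2, c * p.1 - 2 * p.1 ^ 3) with hv_def
  set s : ℝ → Set (ℝ × ℝ) := fun _ => {p : ℝ × ℝ | |p.1| ≤ 1} with hs_def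
  have hlip : ∀ u, LipschitzOnWith 7 (v u) (s u) := by
    intro u
    apply LipschitzOnWith.of_dist_le_mul
    intro p hp q hq
    simp only [hs_def, mem_setOf_eq] at hp hq
    have hd1 : |p.1 - q.1| ≤ dist p q := by
      rw [Prod.dist_eq]; exact le_max_of_le_left (by rw [Real.dist_eq])
    have hd2 : |p.2 - q.2| ≤ dist p q := by
      rw [Prod.dist_eq]; exact le_max_of_le_right (by rw [Real.dist_eq])
    have key : |c * p.1 - 2 * p.1 ^ 3 - (c * q.1 - 2 * q.1 ^ 3)| ≤ 7 * |p.1 - q.1| := by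
      have hring : c * p.1 - 2 * p.1 ^ 3 - (c * q.1 - 2 * q.1 ^ 3)
          = (c - 2 * (p.1 ^ 2 + p.1 * q.1 + q.1 ^ 2)) * (p.1 - q.1) := by ring
      rw [hring, abs_mul]
      have h7 : |c - 2 * (p.1 ^ 2 + p.1 * q.1 + q.1 ^ 2)| ≤ 7 := by
        have hp2 : p.1 ^ 2 ≤ 1 := by nlinarith [abs_nonneg p.1, sq_abs p.1]
        have hq2 : q.1 ^ 2 ≤ 1 := by nlinarith [abs_nonneg q.1, sq_abs q.1]
        have hc' := abs_le.mp hc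
        rw [abs_le]
        constructor <;> nlinarith [sq_nonneg (p.1 + q.1), sq_nonneg (p.1 - q.1)]
      exact mul_le_mul_of_nonneg_right h7 (abs_nonneg _)
    rw [Prod.dist_eq]
    apply max_le
    · rw [Real.dist_eq]
      calc |p.2 - q.2| ≤ dist p q := hd2
        _ ≤ 7 * dist p q := by nlinarith [dist_nonneg (x := p) (y := q)]
    · rw [Real.dist_eq]
      calc |c * p.1 - 2 * p.1 ^ 3 - (c * q.1 - 2 * q.1 ^ 3)| ≤ 7 * |p.1 - q.1| := key
        _ ≤ 7 * dist p q := by nlinarith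
  obtain ⟨hfd, hfd', -⟩ := cd_facts hf
  obtain ⟨hgd, hgd', -⟩ := cd_facts hg
  set F : ℝ → ℝ × ℝ := fun u => (f u, deriv f u) with hF_def
  set G : ℝ → ℝ × ℝ := fun u => (g u, deriv g u) with hG_def
  have hF' : ∀ u, HasDerivAt F (v u (F u)) u := by
    intro u
    have h1 : HasDerivAt f (deriv f u) u := hfd.differentiableAt.hasDerivAt
    have h2 : HasDerivAt (deriv f) (deriv (deriv f) u) u := hfd'.differentiableAt.hasDerivAt
    have := h1.prodMk h2
    simpa [hF_def, hv_def, hf' u] using this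
  have hG' : ∀ u, HasDerivAt G (v u (G u)) u := by
    intro u
    have h1 : HasDerivAt g (deriv g u) u := hgd.differentiableAt.hasDerivAt
    have h2 : HasDerivAt (deriv g) (deriv (deriv g) u) u := hgd'.differentiableAt.hasDerivAt
    have := h1.prodMk h2
    simpa [hG_def, hv_def, hg' u] using this
  have heq : EqOn F G (Ioo (-(|t| + 1)) (|t| + 1)) := by
    apply ODE_solution_unique_of_mem_Ioo (fun u _ => hlip u) (t₀ := 0)
    · constructor <;> nlinarith [abs_nonneg t]
    · exact fun u _ => ⟨hF' u, hfb u⟩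
    · exact fun u _ => ⟨hG' u, hgb u⟩
    · simp [hF_def, hG_def, h0, h0']
  have ht : t ∈ Ioo (-(|t| + 1)) (|t| + 1) := by
    constructor
    · nlinarith [abs_nonneg t, neg_abs_le t]
    · nlinarith [le_abs_self t]
  have := heq ht
  exact congrArg Prod.fst this

lemma energy_lemma {a : ℝ} {x : ℝ → ℝ} (hcd : ContDiff ℝ 2 x)
    (hode : ∀ t, deriv (deriv x) t = (1 - 2 * (a * (1 - a))) * x t - 2 * x t ^ 3)
    (hx0 : x 0 = 1 - a) (hx0' : deriv x 0 = 0) :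
    ∀ t, deriv x t ^ 2 = (x t ^ 2 - a ^ 2) * ((1 - a) ^ 2 - x t ^ 2) := by
  obtain ⟨hd, hd', -⟩ := cd_facts hcd
  set γ : ℝ := a * (1 - a) with hγ
  set E : ℝ → ℝ := fun t => deriv x t ^ 2 - (1 - 2 * γ) * x t ^ 2 + x t ^ 4 with hE_def
  have hE : ∀ u, HasDerivAt E 0 u := by
    intro u
    have h1 : HasDerivAt (fun s => deriv x s ^ 2) (2 * deriv x u ^ 1 * deriv (deriv x) u) u :=
      (hd'.differentiableAt.hasDerivAt).pow 2
    have h2 : HasDerivAt (fun s => x s ^ 2) (2 * x u ^ 1 * deriv x u) u :=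
      (hd.differentiableAt.hasDerivAt).pow 2
    have h4 : HasDerivAt (fun s => x s ^ 4) (4 * x u ^ 3 * deriv x u) u :=
      (hd.differentiableAt.hasDerivAt).pow 4
    have := (h1.sub (h2.const_mul (1 - 2 * γ))).add h4
    exact this.congr_deriv (by rw [hode u]; ring)
  have hconst : ∀ t, E t = E 0 := fun t =>
    is_const_of_deriv_eq_zero (fun u => (hE u).differentiableAt) (fun u => (hE u).deriv) t 0
  intro t
  have h := hconst t
  simp only [hE_def, hx0, hx0'] at h
  nlinarith [h]

lemma bounds_lemma {a : ℝ} {x : ℝ → ℝ} (ha : 0 < a) (ha2 : a < 1/2) (hcd : ContDiff ℝ 2 x)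
    (hen : ∀ t, deriv x t ^ 2 = (x t ^ 2 - a ^ 2) * ((1 - a) ^ 2 - x t ^ 2))
    (hx0 : x 0 = 1 - a) :
    ∀ t, a ≤ x t ∧ x t ≤ 1 - a := by
  have hsq : ∀ t, a ^ 2 ≤ x t ^ 2 ∧ x t ^ 2 ≤ (1 - a) ^ 2 := by
    intro t
    have h := hen t
    have h0 : (0:ℝ) ≤ deriv x t ^ 2 := sq_nonneg _
    constructor
    · nlinarith [sq_nonneg (x t)]
    · nlinarith [sq_nonneg (x t)]
  have hpos : ∀ t, 0 < x t := by
    intro t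
    by_contra hle
    push_neg at hle
    have h0pos : 0 < x 0 := by rw [hx0]; linarith
    have : (0:ℝ) ∈ uIcc (x t) (x 0) := by
      rw [mem_uIcc]; left; exact ⟨hle, le_of_lt h0pos⟩
    obtain ⟨s, -, hs⟩ := intermediate_value_uIcc (hcd.continuous.continuousOn) this
    have := (hsq s).1
    rw [hs] at this
    nlinarith
  intro t
  have h := hsq t
  have hp := hpos t
  constructor <;> nlinarith

lemma reflect_sol {c : ℝ} {x : ℝ → ℝ} (hcd : ContDiff ℝ 2 x)
    (hode : ∀ t, deriv (deriv x) t = c * x t - 2 * x t ^ 3) :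
    ContDiff ℝ 2 (fun t => x (-t)) ∧
    (∀ t, deriv (fun s => x (-s)) t = -deriv x (-t)) ∧
    (∀ t, deriv (deriv (fun s => x (-s))) t = c * x (-t) - 2 * x (-t) ^ 3) := by
  have hcd' : ContDiff ℝ 2 (fun t => x (-t)) := hcd.comp contDiff_neg
  have hd1 : ∀ t, deriv (fun s => x (-s)) t = -deriv x (-t) := fun t => deriv_comp_neg x t
  refine ⟨hcd', hd1, fun t => ?_⟩
  have : deriv (fun s => x (-s)) = fun s => -(deriv x (-s)) := funext hd1
  rw [this]
  rw [deriv.fun_neg, deriv_comp_neg (deriv x) t]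
  rw [neg_neg, hode]

lemma shift_sol {c τ : ℝ} {x : ℝ → ℝ} (hcd : ContDiff ℝ 2 x)
    (hode : ∀ t, deriv (deriv x) t = c * x t - 2 * x t ^ 3) :
    ContDiff ℝ 2 (fun t => x (t + τ)) ∧
    (∀ t, deriv (fun s => x (s + τ)) t = deriv x (t + τ)) ∧
    (∀ t, deriv (deriv (fun s => x (s + τ))) t = c * x (t + τ) - 2 * x (t + τ) ^ 3) := by
  have hcd' : ContDiff ℝ 2 (fun t => x (t + τ)) := hcd.comp (contDiff_id.add contDiff_const)
  have hd1 : ∀ t, deriv (fun s => x (s + τ)) t = deriv x (t + τ) :=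
    fun t => deriv_comp_add_const x τ t
  refine ⟨hcd', hd1, fun t => ?_⟩
  have : deriv (fun s => x (s + τ)) = fun s => deriv x (s + τ) := funext hd1
  rw [this, deriv_comp_add_const (deriv x) τ t, hode]

lemma inv_sol {a : ℝ} {x : ℝ → ℝ} (ha : 0 < a) (ha2 : a < 1/2) (hcd : ContDiff ℝ 2 x)
    (hode : ∀ t, deriv (deriv x) t = (1 - 2 * (a * (1 - a))) * x t - 2 * x t ^ 3)
    (hen : ∀ t, deriv x t ^ 2 = (x t ^ 2 - a ^ 2) * ((1 - a) ^ 2 - x t ^ 2))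
    (hpos : ∀ t, a ≤ x t) :
    ContDiff ℝ 2 (fun t => a * (1 - a) / x t) ∧
    (∀ t, deriv (fun s => a * (1 - a) / x s) t = -(a * (1 - a)) * deriv x t / x t ^ 2) ∧
    (∀ t, deriv (deriv (fun s => a * (1 - a) / x s)) t =
      (1 - 2 * (a * (1 - a))) * (a * (1 - a) / x t) - 2 * (a * (1 - a) / x t) ^ 3) := by
  obtain ⟨hd, hd', -⟩ := cd_facts hcd
  set γ : ℝ := a * (1 - a) with hγ
  have hne : ∀ t, x t ≠ 0 := fun t => ne_of_gt (lt_of_lt_of_le ha (hpos t))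
  have hcd' : ContDiff ℝ 2 (fun t => γ / x t) := contDiff_const.div hcd hne
  have hd1 : ∀ t, HasDerivAt (fun s => γ / x s) (-γ * deriv x t / x t ^ 2) t := by
    intro t
    have := (hasDerivAt_const t γ).div (hd.differentiableAt.hasDerivAt) (hne t)
    exact this.congr_deriv (by ring)
  have hd1' : ∀ t, deriv (fun s => γ / x s) t = -γ * deriv x t / x t ^ 2 :=
    fun t => (hd1 t).deriv
  refine ⟨hcd', fun t => by rw [hd1' t]; try ring, fun t => ?_⟩
  have hfun : deriv (fun s => γ / x s) = fun s => -γ * deriv x s / x s ^ 2 := funext hd1'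
  rw [hfun]
  have hnum : HasDerivAt (fun s => -γ * deriv x s)
      (-γ * deriv (deriv x) t) t :=
    HasDerivAt.const_mul (-γ) (hd'.differentiableAt.hasDerivAt)
  have hden : HasDerivAt (fun s => x s ^ 2) (2 * x t ^ 1 * deriv x t) t :=
    (hd.differentiableAt.hasDerivAt).pow 2
  have hdiv := hnum.div hden (pow_ne_zero 2 (hne t))
  have hdiv' : HasDerivAt (fun s => -γ * deriv x s / x s ^ 2) _ t := hdiv
  rw [hdiv'.deriv]
  have hVV : -γ * deriv x t * (2 * x t ^ 1 * deriv x t)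
      = -(2 * γ * x t * ((x t ^ 2 - a ^ 2) * ((1 - a) ^ 2 - x t ^ 2))) := by
    rw [← hen t]; ring
  rw [hode t, hVV, hγ]
  have hX := hne t
  field_simp
  ring

/-- properties of w_a = z_a'/x_a for a ∈ (0,1/4). -/
theorem statement15 (a : ℝ) (ha : a ∈ Set.Ioo (0:ℝ) (1/4)) (x : ℝ → ℝ) (τ : ℝ)
    (hx : IsUnduloid a x) (hτ : IsMinPeriod x (2 * τ)) :
    let w : ℝ → ℝ := fun t => deriv (zshape a x) t / x t
    -- (i)
    ((∀ t, deriv (deriv w) t = (1 + 4 * (a * (1 - a))) * w t - 2 * w t ^ 3) ∧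
     (∀ t, deriv w t ^ 2 = (1 - w t ^ 2) * (w t ^ 2 - 4 * (a * (1 - a))))) ∧
    -- (ii)
    ((∀ t, 0 < w t ∧ w t ≤ 1) ∧ w 0 = 1 ∧ (∀ t, w (-t) = w t) ∧
      Function.Periodic w τ) ∧
    -- (iii)
    (w (τ / 2) = 2 * Real.sqrt (a * (1 - a)) ∧ (∀ t, w (τ / 2) ≤ w t) ∧
      x (τ / 2) ^ 2 = a * (1 - a)) := by
  intro w
  obtain ⟨ha1, ha4⟩ := ha
  obtain ⟨hcd, hode, hx0, hx0'⟩ := hx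
  obtain ⟨hd, hd', -⟩ := cd_facts hcd
  have ha2 : a < 1/2 := by linarith
  have hγpos : 0 < a * (1 - a) := by nlinarith
  have hγlt : a * (1 - a) < 1/2 := by nlinarith
  have hc : |1 - 2 * (a * (1 - a))| ≤ 1 := by rw [abs_le]; constructor <;> nlinarith
  have hen := energy_lemma hcd hode hx0 hx0'
  have hbd := bounds_lemma ha1 ha2 hcd hen hx0
  have hxpos : ∀ t, 0 < x t := fun t => lt_of_lt_of_le ha1 (hbd t).1
  have hne : ∀ t, x t ≠ 0 := fun t => ne_of_gt (hxpos t)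
  have hxb : ∀ t, |x t| ≤ 1 := by
    intro t; rw [abs_le]; have := hbd t; constructor <;> nlinarith
  have hτpos : 0 < τ := by have := hτ.1; linarith
  -- evenness of x
  obtain ⟨hrcd, hrd1, hrode⟩ := reflect_sol hcd hode
  have heven : ∀ t, x (-t) = x t := by
    apply ode_uniq hc hrcd hcd hrode hode (fun t => hxb (-t)) hxb
    · simp
    · rw [hrd1 0]; simp [hx0']
  -- derivative at τ vanishes
  have hper : Function.Periodic x (2 * τ) := hτ.2.1
  have hsym : (fun s => x (τ + s)) = (fun s => x (τ - s)) := by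
    funext s
    have h1 : x (τ + s) = x ((s - τ) + 2 * τ) := by ring_nf
    rw [h1, hper (s - τ)]
    have h2 : s - τ = -(τ - s) := by ring
    rw [h2, heven]
  have hdτ : deriv x τ = 0 := by
    have h1 : deriv (fun s => x (τ + s)) 0 = deriv (fun s => x (τ - s)) 0 := by rw [hsym]
    rw [deriv_comp_const_add x τ 0, deriv_comp_const_sub x τ 0] at h1
    simp at h1
    linarith
  -- x τ = a
  obtain ⟨hscd, hsd1, hsode⟩ := shift_sol (τ := τ) hcd hode
  have hxτ : x τ = a := by
    have henτ := hen τ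
    rw [hdτ] at henτ
    have hbτ := hbd τ
    have henτ' : (x τ ^ 2 - a ^ 2) * ((1 - a) ^ 2 - x τ ^ 2) = 0 := by
      rw [← henτ]; norm_num
    have hcases : x τ = a ∨ x τ = 1 - a := by
      rcases mul_eq_zero.mp henτ' with h | h
      · left; nlinarith
      · right; nlinarith
    rcases hcases with h | h
    · exact h
    · exfalso
      have hperiodic : Function.Periodic x τ := by
        intro t
        exact ode_uniq hc hscd hcd hsode hode (fun t => hxb (t + τ)) hxb
          (by simpa [h] using hx0.symm) (by rw [hsd1 0]; simp [hdτ, hx0']) t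
      have := hτ.2.2 τ hτpos hperiodic
      linarith
  -- key identity
  obtain ⟨hicd, hid1, hiode⟩ := inv_sol ha1 ha2 hcd hode hen (fun t => (hbd t).1)
  have hib : ∀ t, |a * (1 - a) / x t| ≤ 1 := by
    intro t
    rw [abs_le]
    have h1 := hbd t
    have h2 := hxpos t
    constructor
    · have : 0 < a * (1 - a) / x t := div_pos hγpos h2
      linarith
    · rw [div_le_one h2]; nlinarith
  have hkey : ∀ t, x (t + τ) = a * (1 - a) / x t := by
    apply ode_uniq hc hscd hicd hsode hiode (fun t => hxb (t + τ)) hib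
    · have h1a : (1:ℝ) - a ≠ 0 := by linarith
      rw [show (0:ℝ) + τ = τ from zero_add τ, hxτ, hx0]
      field_simp
    · rw [hsd1 0, hid1 0]; simp [hdτ, hx0']
  -- formula for w
  have hzderiv : ∀ t, deriv (zshape a x) t = a * (1 - a) + x t ^ 2 := by
    intro t
    exact Continuous.deriv_integral _ (continuous_const.add (hcd.continuous.pow 2)) 0 t
  have hw : ∀ t, w t = x t + a * (1 - a) / x t := by
    intro t
    show deriv (zshape a x) t / x t = _
    rw [hzderiv t]
    field_simp [hne t]
    ring
  have hwfun : w = fun t => x t + a * (1 - a) / x t := funext hw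
  obtain ⟨hgd, hgd', -⟩ := cd_facts hicd
  -- derivative of w
  have hdw : ∀ t, deriv w t = deriv x t + deriv (fun s => a * (1 - a) / x s) t := by
    intro t
    rw [hwfun]
    exact deriv_add (hd.differentiableAt) (hgd.differentiableAt)
  have hxg : ∀ t, x t * (a * (1 - a) / x t) = a * (1 - a) := by
    intro t; field_simp [hne t]
  -- (i) first
  have hi1 : ∀ t, deriv (deriv w) t = (1 + 4 * (a * (1 - a))) * w t - 2 * w t ^ 3 := by
    intro t
    have h1 : deriv w = fun s => deriv x s + deriv (fun u => a * (1 - a) / x u) s :=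
      funext hdw
    rw [h1]
    rw [deriv_fun_add (hd'.differentiableAt) (hgd'.differentiableAt)]
    rw [hode t, hiode t, hw t]
    linear_combination (6 * (x t + a * (1 - a) / x t)) * hxg t
  -- (i) second
  have hi2 : ∀ t, deriv w t ^ 2 = (1 - w t ^ 2) * (w t ^ 2 - 4 * (a * (1 - a))) := by
    intro t
    have h1 : deriv w t = deriv x t * (x t ^ 2 - a * (1 - a)) / x t ^ 2 := by
      rw [hdw t, hid1 t]
      field_simp [hne t]
      ring
    rw [h1, hw t, div_pow, mul_pow, hen t]
    field_simp [hne t]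
    ring
  -- (ii)
  have hii1 : ∀ t, 0 < w t ∧ w t ≤ 1 := by
    intro t
    constructor
    · rw [hw t]
      have := hxpos t
      have : 0 < a * (1 - a) / x t := div_pos hγpos (hxpos t)
      linarith [hxpos t]
    · rw [hw t]
      have h2 : x t + a * (1 - a) / x t = (x t ^ 2 + a * (1 - a)) / x t := by
        field_simp [hne t]
      rw [h2, div_le_one (hxpos t)]
      have := hbd t
      nlinarith
  have hii2 : w 0 = 1 := by
    rw [hw 0, hx0]
    have h1 : (1:ℝ) - a ≠ 0 := by linarith
    field_simp
    try ring
  have hii3 : ∀ t, w (-t) = w t := by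
    intro t; rw [hw, hw, heven t]
  have hii4 : Function.Periodic w τ := by
    intro t
    rw [hw (t + τ), hw t, hkey t]
    have h1 := hne t
    have h2 : a * (1 - a) / x t ≠ 0 := div_ne_zero (ne_of_gt hγpos) h1
    have h3 : (1:ℝ) - a ≠ 0 := by linarith
    field_simp [h1, h3]
    ring
  -- (iii)
  have hx2 : x (τ / 2) ^ 2 = a * (1 - a) := by
    have h1 := hkey (-(τ / 2))
    have h2 : -(τ / 2) + τ = τ / 2 := by ring
    rw [h2, heven (τ / 2)] at h1
    have h3 := hne (τ / 2)
    field_simp [h3] at h1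
    nlinarith [h1]
  have hsqrt : Real.sqrt (a * (1 - a)) = x (τ / 2) := by
    rw [← hx2, Real.sqrt_sq (le_of_lt (hxpos (τ / 2)))]
  have hiii1 : w (τ / 2) = 2 * Real.sqrt (a * (1 - a)) := by
    rw [hw (τ / 2), hsqrt, ← hx2]
    field_simp [hne (τ / 2)]
    ring
  have hiii2 : ∀ t, w (τ / 2) ≤ w t := by
    intro t
    rw [hiii1, hw t]
    have hsg : Real.sqrt (a * (1 - a)) ^ 2 = a * (1 - a) := Real.sq_sqrt (le_of_lt hγpos)
    have h1 : x t + a * (1 - a) / x t = (x t ^ 2 + a * (1 - a)) / x t := by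
      field_simp [hne t]
    rw [h1, le_div_iff₀ (hxpos t)]
    have hq := sq_nonneg (x t - Real.sqrt (a * (1 - a)))
    rw [sub_sq, hsg] at hq
    linarith
  exact ⟨⟨hi1, hi2⟩, ⟨hii1, hii2, hii3, hii4⟩, hiii1, hiii2, hx2⟩

end
end

section
/- Let μ ∈ (1,2) and C > 0. Suppose φ : ℝ² → ℝ is of class C², 2π-periodic in θ, even in t (φ(t,θ) = φ(-t,θ)), symmetric about θ = π/2 (φ(t,π/2-θ) = φ(t,π/2+θ)), satisfies ∂_{tt}φ + ∂_{θθ}φ + 2(sech t)²·φ = 0 on ℝ², and obeys the decay bound |φ(t,θ)| ≤ C·(sech t)^{μ} for all (t,θ) ∈ ℝ². Then φ ≡ 0. -/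
noncomputable section

open Real Set

open MeasureTheory Filter Topology intervalIntegral Complex AddCircle

namespace S18

lemma coshne (t : ℝ) : Real.cosh t ≠ 0 := (Real.cosh_pos t).ne'

def psi (t : ℝ) : ℝ := 1 - t * Real.sinh t / Real.cosh t
def psi1 (t : ℝ) : ℝ := -(Real.sinh t / Real.cosh t) - t / Real.cosh t ^ 2

lemma hasDerivAt_psi (t : ℝ) : HasDerivAt psi (psi1 t) t := by
  have h1 : HasDerivAt (fun t : ℝ => t * Real.sinh t) (1 * Real.sinh t + t * Real.cosh t) t :=
    (hasDerivAt_id t).mul (Real.hasDerivAt_sinh t)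
  have h2 := h1.div (Real.hasDerivAt_cosh t) (coshne t)
  have h3 := (hasDerivAt_const t (1:ℝ)).sub h2
  refine h3.congr_deriv ?_
  have hc := Real.cosh_sq_sub_sinh_sq t
  have h := coshne t
  unfold psi1
  field_simp
  linear_combination (-t) * hc

lemma hasDerivAt_psi1 (t : ℝ) :
    HasDerivAt psi1 (-(2 * ((Real.cosh t)⁻¹)^2) * psi t) t := by
  have h1 := ((Real.hasDerivAt_sinh t).div (Real.hasDerivAt_cosh t) (coshne t)).neg
  have h2 := (hasDerivAt_id t).div ((Real.hasDerivAt_cosh t).pow 2) (pow_ne_zero 2 (coshne t))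
  have h3 := h1.sub h2
  refine h3.congr_deriv ?_
  have hc := Real.cosh_sq_sub_sinh_sq t
  have h := coshne t
  unfold psi
  simp only [id, Pi.pow_apply]
  field_simp
  linear_combination (-Real.cosh t ^ 2) * hc

def sh (t : ℝ) : ℝ := (Real.cosh t)⁻¹
def sh1 (t : ℝ) : ℝ := -Real.sinh t / Real.cosh t ^ 2

lemma hasDerivAt_sh (t : ℝ) : HasDerivAt sh (sh1 t) t := by
  exact (Real.hasDerivAt_cosh t).inv (coshne t)

lemma hasDerivAt_sh1 (t : ℝ) :
    HasDerivAt sh1 ((1 - 2 * ((Real.cosh t)⁻¹)^2) * sh t) t := by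
  have h1 := ((Real.hasDerivAt_sinh t).div ((Real.hasDerivAt_cosh t).pow 2)
    (pow_ne_zero 2 (coshne t))).neg
  have h3 : HasDerivAt sh1
      (-((Real.cosh t * Real.cosh t ^ 2 - Real.sinh t * ((2:ℕ) * Real.cosh t ^ (2-1) * Real.sinh t))
        / (Real.cosh t ^ 2) ^ 2)) t := by
    refine h1.congr_of_eventuallyEq (Eventually.of_forall fun x => ?_)
    simp [sh1, neg_div]
  refine h3.congr_deriv ?_
  have hc := Real.cosh_sq_sub_sinh_sq t
  have h := coshne t
  unfold sh
  field_simp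
  linear_combination (-2 * Real.cosh t) * hc

/-- Uniqueness for `u'' = q u` with bounded `q`. -/
lemma ode_unique (q : ℝ → ℝ) (hqb : ∀ t, |q t| ≤ 4)
    (u u1 w w1 : ℝ → ℝ)
    (hu : ∀ t, HasDerivAt u (u1 t) t) (hu1 : ∀ t, HasDerivAt u1 (q t * u t) t)
    (hw : ∀ t, HasDerivAt w (w1 t) t) (hw1 : ∀ t, HasDerivAt w1 (q t * w t) t)
    (h0 : u 0 = w 0) (h0' : u1 0 = w1 0) : ∀ t, u t = w t := by
  intro T
  set v : ℝ → ℝ × ℝ → ℝ × ℝ := fun t p => (p.2, q t * p.1) with hv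
  have hlip : ∀ t, LipschitzWith 4 (v t) := by
    intro t
    apply LipschitzWith.of_dist_le_mul
    intro p p'
    have h1 : dist (v t p) (v t p') = max (dist p.2 p'.2) (dist (q t * p.1) (q t * p'.1)) :=
      Prod.dist_eq
    have h2 : dist p p' = max (dist p.1 p'.1) (dist p.2 p'.2) := Prod.dist_eq
    have hq := hqb t
    have e1 : dist (q t * p.1) (q t * p'.1) = |q t| * dist p.1 p'.1 := by
      rw [Real.dist_eq, Real.dist_eq, ← abs_mul]; ring_nf
    rw [h1, h2, e1]
    have d1 : (0:ℝ) ≤ dist p.1 p'.1 := dist_nonneg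
    have d2 : (0:ℝ) ≤ dist p.2 p'.2 := dist_nonneg
    push_cast
    rcases le_total (dist p.1 p'.1) (dist p.2 p'.2) with h | h <;>
      [rw [max_eq_right h]; rw [max_eq_left h]] <;>
      apply max_le <;> nlinarith [abs_nonneg (q t)]
  set f : ℝ → ℝ × ℝ := fun t => (u t, u1 t) with hf
  set g : ℝ → ℝ × ℝ := fun t => (w t, w1 t) with hg
  have hT : T ∈ Icc (-(|T|+1)) (|T|+1) := by
    constructor <;> cases abs_cases T <;> linarith [abs_nonneg T]
  have h := ODE_solution_unique_of_mem_Icc (v := v) (s := fun _ => univ)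
    (f := f) (g := g)
    (fun t _ => (hlip t).lipschitzOnWith)
    (show (0:ℝ) ∈ Ioo (-(|T|+1)) (|T|+1) by constructor <;> [linarith [abs_nonneg T]; linarith [abs_nonneg T]])
    (fun t _ => ((hu t).prodMk (hu1 t)).continuousAt.continuousWithinAt)
    (fun t _ => (hu t).prodMk (hu1 t))
    (fun _ _ => trivial)
    (fun t _ => ((hw t).prodMk (hw1 t)).continuousAt.continuousWithinAt)
    (fun t _ => (hw t).prodMk (hw1 t))
    (fun _ _ => trivial)
    (by simp [hf, hg, h0, h0'])
  have := h hT
  exact congrArg Prod.fst this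

lemma even_deriv_zero (u u1 : ℝ → ℝ) (hu : ∀ t, HasDerivAt u (u1 t) t)
    (he : ∀ t, u (-t) = u t) : u1 0 = 0 := by
  have h1 : HasDerivAt (fun t : ℝ => u (-t)) (u1 (-0) * (-1)) 0 :=
    (hu (-0)).comp 0 ((hasDerivAt_id (0:ℝ)).neg)
  have h2 : (fun t : ℝ => u (-t)) = u := funext he
  rw [h2, neg_zero] at h1
  have := (hu 0).unique h1
  linarith

/-- Maximum principle: if `u'' = q u`, `q ≥ 1`, and `u → 0` at `±∞` then `u ≤ 0`. -/
lemma nonpos_of_decay (q : ℝ → ℝ) (hq : ∀ t, 1 ≤ q t) (u u1 : ℝ → ℝ)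
    (hu : ∀ t, HasDerivAt u (u1 t) t) (hu1 : ∀ t, HasDerivAt u1 (q t * u t) t)
    (htop : Tendsto u atTop (𝓝 0)) (hbot : Tendsto u atBot (𝓝 0)) :
    ∀ t, u t ≤ 0 := by
  by_contra hcon
  push_neg at hcon
  obtain ⟨t0, ht0⟩ := hcon
  have hcu : Continuous u := continuous_iff_continuousAt.2 fun t => (hu t).continuousAt
  have h1 : ∀ᶠ t in atTop, dist (u t) 0 < u t0 := Metric.tendsto_nhds.mp htop (u t0) ht0
  have h2 : ∀ᶠ t in atBot, dist (u t) 0 < u t0 := Metric.tendsto_nhds.mp hbot (u t0) ht0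
  obtain ⟨R1, hR1⟩ := eventually_atTop.mp h1
  obtain ⟨R2, hR2⟩ := eventually_atBot.mp h2
  set a := min R2 t0 - 1 with ha
  set b := max R1 t0 + 1 with hb
  have hab : a ≤ b := by
    have := min_le_right R2 t0; have := le_max_right R1 t0; linarith
  have ht0m : t0 ∈ Icc a b := by
    constructor
    · have := min_le_right R2 t0; linarith
    · have := le_max_right R1 t0; linarith
  obtain ⟨m, hm, hmax⟩ := (isCompact_Icc (a := a) (b := b)).exists_isMaxOn
    ⟨t0, ht0m⟩ hcu.continuousOn
  have hum : 0 < u m := lt_of_lt_of_le ht0 (hmax ht0m)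
  have hglobal : ∀ t, u t ≤ u m := by
    intro t
    rcases le_or_gt t a with h | h
    · have : t ≤ R2 := by have := min_le_left R2 t0; linarith
      have := hR2 t this
      rw [Real.dist_eq, sub_zero] at this
      have := abs_lt.mp this
      have h6 : u t0 ≤ u m := hmax ht0m
      linarith
    · rcases le_or_gt t b with h' | h'
      · exact hmax ⟨h.le, h'⟩
      · have : R1 ≤ t := by have := le_max_left R1 t0; linarith
        have := hR1 t this
        rw [Real.dist_eq, sub_zero] at this
        have := abs_lt.mp this
        have h6 : u t0 ≤ u m := hmax ht0m
        linarith
  have hloc : IsLocalMax u m := Filter.Eventually.of_forall hglobal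
  have hderiv0 : u1 m = 0 := by
    have := hloc.deriv_eq_zero
    rwa [(hu m).deriv] at this
  have hpos : 0 < q m * u m := mul_pos (lt_of_lt_of_le one_pos (hq m)) hum
  have hslope : Tendsto (slope u1 m) (𝓝[≠] m) (𝓝 (q m * u m)) :=
    hasDerivAt_iff_tendsto_slope.mp (hu1 m)
  have hev : ∀ᶠ s in 𝓝[≠] m, 0 < slope u1 m s :=
    hslope.eventually (eventually_gt_nhds hpos)
  have hev' : ∀ᶠ s in 𝓝[>] m, 0 < u1 s := by
    have hmono : 𝓝[>] m ≤ 𝓝[≠] m :=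
      nhdsWithin_mono m (fun x hx => ne_of_gt hx)
    filter_upwards [hmono hev, self_mem_nhdsWithin] with s hs hs'
    have hsm : (0:ℝ) < s - m := by simpa [sub_pos] using hs'
    have : slope u1 m s = u1 s / (s - m) := by
      rw [slope_def_field, hderiv0]; ring_nf
    rw [this] at hs
    have := (div_pos_iff.mp hs)
    rcases this with ⟨h1', _⟩ | ⟨_, h2'⟩
    · exact h1'
    · linarith
  obtain ⟨c, hc, hsub⟩ := mem_nhdsGT_iff_exists_Ioo_subset.mp hev'
  set m' := (m + c) / 2 with hm'
  have hmm' : m < m' := by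
    have : m < c := hc
    simp only [hm']; linarith
  have hmono : StrictMonoOn u (Icc m m') := by
    apply strictMonoOn_of_deriv_pos (convex_Icc m m') hcu.continuousOn
    intro s hs
    rw [interior_Icc] at hs
    have hsIoo : s ∈ Ioo m c := ⟨hs.1, by have : m < c := hc; simp only [hm'] at hs; linarith [hs.2]⟩
    rw [(hu s).deriv]
    exact hsub hsIoo
  have := hmono (left_mem_Icc.mpr hmm'.le) (right_mem_Icc.mpr hmm'.le) hmm'
  linarith [hglobal m']

lemma sech_pos (t : ℝ) : 0 < (Real.cosh t)⁻¹ := inv_pos.mpr (Real.cosh_pos t)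
lemma sech_le_one (t : ℝ) : (Real.cosh t)⁻¹ ≤ 1 := by
  rw [inv_le_one_iff₀]; right; exact Real.one_le_cosh t

lemma sech_tendsto_top : Tendsto (fun t => (Real.cosh t)⁻¹) atTop (𝓝 0) := by
  apply squeeze_zero (fun t => (sech_pos t).le)
    (g := fun t => 2 * Real.exp (-t))
  · intro t
    have h1 : Real.exp t / 2 ≤ Real.cosh t := by
      rw [Real.cosh_eq]; have := Real.exp_pos (-t); linarith
    have h2 : (0:ℝ) < Real.exp t / 2 := by positivity
    calc (Real.cosh t)⁻¹ ≤ (Real.exp t / 2)⁻¹ := by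
          apply inv_anti₀ h2 h1
      _ = 2 * Real.exp (-t) := by rw [Real.exp_neg]; field_simp
  · have := (Real.tendsto_exp_atBot.comp tendsto_neg_atTop_atBot).const_mul (2:ℝ)
    simpa using this

lemma sech_tendsto_bot : Tendsto (fun t => (Real.cosh t)⁻¹) atBot (𝓝 0) := by
  apply squeeze_zero (fun t => (sech_pos t).le)
    (g := fun t => 2 * Real.exp t)
  · intro t
    have h1 : Real.exp (-t) / 2 ≤ Real.cosh t := by
      rw [Real.cosh_eq]; have := Real.exp_pos t; linarith
    have h2 : (0:ℝ) < Real.exp (-t) / 2 := by positivity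
    calc (Real.cosh t)⁻¹ ≤ (Real.exp (-t) / 2)⁻¹ := by
          apply inv_anti₀ h2 h1
      _ = 2 * Real.exp t := by rw [Real.exp_neg]; field_simp
  · have := Real.tendsto_exp_atBot.const_mul (2:ℝ)
    simpa using this

lemma sech_rpow_tendsto_top (μ : ℝ) (hμ : 0 < μ) :
    Tendsto (fun t => ((Real.cosh t)⁻¹) ^ μ) atTop (𝓝 0) := by
  have := sech_tendsto_top.rpow_const (p := μ) (Or.inr hμ.le)
  simpa [Real.zero_rpow hμ.ne'] using this

lemma sech_rpow_tendsto_bot (μ : ℝ) (hμ : 0 < μ) :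
    Tendsto (fun t => ((Real.cosh t)⁻¹) ^ μ) atBot (𝓝 0) := by
  have := sech_tendsto_bot.rpow_const (p := μ) (Or.inr hμ.le)
  simpa [Real.zero_rpow hμ.ne'] using this

/-- Core ODE mode analysis. -/
lemma mode_vanish (μ C' c : ℝ) (hμ : 1 < μ) (hc : c = 0 ∨ c = 1 ∨ 4 ≤ c)
    (u u1 : ℝ → ℝ) (hu : ∀ t, HasDerivAt u (u1 t) t)
    (hu1 : ∀ t, HasDerivAt u1 ((c - 2 * ((Real.cosh t)⁻¹)^2) * u t) t)
    (hev : ∀ t, u (-t) = u t)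
    (hdec : ∀ t, |u t| ≤ C' * ((Real.cosh t)⁻¹) ^ μ) : ∀ t, u t = 0 := by
  have h10 : u1 0 = 0 := even_deriv_zero u u1 hu hev
  set q : ℝ → ℝ := fun t => c - 2 * ((Real.cosh t)⁻¹)^2 with hq
  rcases hc with h | h | h
  · -- c = 0 : compare with psi
    have hrep : ∀ t, u t = u 0 * psi t := by
      apply ode_unique q
      · intro t
        rw [hq]
        have h1 := sech_pos t
        have h2 := sech_le_one t
        rw [abs_le]
        constructor <;> [skip; skip] <;> rw [h] <;> nlinarith
      · exact hu
      · exact hu1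
      · exact fun t => (hasDerivAt_psi t).const_mul (u 0)
      · intro t
        have := (hasDerivAt_psi1 t).const_mul (u 0)
        refine this.congr_deriv ?_
        rw [hq, h]; ring
      · simp [psi]
      · simp [h10, psi1]
    have hu0 : u 0 = 0 := by
      by_contra hne
      set M := max C' 0 / |u 0| with hM
      have hMnn : 0 ≤ M := by
        apply div_nonneg (le_max_right C' 0) (abs_nonneg _)
      set T := 2 * (M + 2) with hT
      have hT1 : 1 ≤ T := by linarith
      have hbound : |u 0| * |psi T| ≤ max C' 0 := by
        have := hdec T
        rw [hrep T, abs_mul] at this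
        have hrp : ((Real.cosh T)⁻¹) ^ μ ≤ 1 :=
          Real.rpow_le_one (sech_pos T).le (sech_le_one T) (by linarith)
        have h2 : C' * ((Real.cosh T)⁻¹) ^ μ ≤ max C' 0 := by
          rcases le_total C' 0 with hC | hC
          · have h3 : C' * ((Real.cosh T)⁻¹) ^ μ ≤ 0 := by
              apply mul_nonpos_of_nonpos_of_nonneg hC
              positivity
            exact h3.trans (le_max_right C' 0)
          · have h3 : C' * ((Real.cosh T)⁻¹) ^ μ ≤ C' * 1 :=
              mul_le_mul_of_nonneg_left hrp hC
            rw [mul_one] at h3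
            exact h3.trans (le_max_left _ _)
        linarith
      -- psi T ≤ 1 - T/2 ≤ -M-1
      have hpsiT : psi T ≤ 1 - T / 2 := by
        unfold psi
        have hcp := Real.cosh_pos T
        have hexp : Real.exp 1 ≤ Real.exp T := Real.exp_le_exp.mpr hT1
        have hexp2 : Real.exp (-T) ≤ Real.exp (-1) := Real.exp_le_exp.mpr (by linarith)
        have he1 : (2.7182818283:ℝ) < Real.exp 1 := Real.exp_one_gt_d9
        have hinv : Real.exp (-1) * Real.exp 1 = 1 := by
          rw [← Real.exp_add]; norm_num
        have h2s : Real.cosh T ≤ 2 * Real.sinh T := by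
          rw [Real.cosh_eq, Real.sinh_eq]
          have hexppos : 0 < Real.exp (-1) := Real.exp_pos _
          nlinarith
        have hTpos : (0:ℝ) < T := by linarith
        have : T / 2 ≤ T * Real.sinh T / Real.cosh T := by
          rw [div_le_div_iff₀ (by norm_num) hcp]
          nlinarith
        linarith
      have hMlt : M + 1 ≤ |psi T| := by
        rw [abs_of_nonpos (by linarith)]
        linarith
      have : |u 0| * (M + 1) ≤ |u 0| * |psi T| :=
        mul_le_mul_of_nonneg_left hMlt (abs_nonneg _)
      have habs : 0 < |u 0| := abs_pos.mpr hne
      have hMeq : |u 0| * M = max C' 0 := by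
        rw [hM]; field_simp
      nlinarith
    intro t; rw [hrep t, hu0, zero_mul]
  · -- c = 1 : compare with sech
    have hrep : ∀ t, u t = u 0 * sh t := by
      apply ode_unique q
      · intro t
        rw [hq]
        have h1 := sech_pos t
        have h2 := sech_le_one t
        rw [abs_le]
        constructor <;> rw [h] <;> nlinarith
      · exact hu
      · exact hu1
      · exact fun t => (hasDerivAt_sh t).const_mul (u 0)
      · intro t
        have := (hasDerivAt_sh1 t).const_mul (u 0)
        refine this.congr_deriv ?_
        rw [hq, h]; ring
      · simp [sh]
      · simp [h10, sh1]
    have hu0 : u 0 = 0 := by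
      have key : ∀ t : ℝ, |u 0| ≤ C' * ((Real.cosh t)⁻¹) ^ (μ - 1) := by
        intro t
        have hd := hdec t
        rw [hrep t, abs_mul] at hd
        have hshp := sech_pos t
        have habs : |sh t| = (Real.cosh t)⁻¹ := abs_of_pos hshp
        rw [habs] at hd
        have hrw : C' * ((Real.cosh t)⁻¹) ^ μ
            = (C' * ((Real.cosh t)⁻¹) ^ (μ - 1)) * (Real.cosh t)⁻¹ := by
          rw [mul_assoc]
          congr 1
          rw [show μ = (μ - 1) + 1 by ring, Real.rpow_add hshp, Real.rpow_one]
          ring_nf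
        rw [hrw] at hd
        exact le_of_mul_le_mul_right hd hshp
      have hlim : Tendsto (fun t => C' * ((Real.cosh t)⁻¹) ^ (μ - 1)) atTop (𝓝 0) := by
        have := (sech_rpow_tendsto_top (μ - 1) (by linarith)).const_mul C'
        simpa using this
      have := ge_of_tendsto hlim (Eventually.of_forall key)
      have := abs_nonneg (u 0)
      have : |u 0| = 0 := le_antisymm (by linarith) (abs_nonneg _)
      exact abs_eq_zero.mp this
    intro t; rw [hrep t, hu0, zero_mul]
  · -- 4 ≤ c : maximum principle
    have hq1 : ∀ t, 1 ≤ q t := by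
      intro t
      rw [hq]
      have h1 := sech_pos t
      have h2 := sech_le_one t
      nlinarith
    have htop : Tendsto u atTop (𝓝 0) := by
      apply squeeze_zero_norm hdec
      have := (sech_rpow_tendsto_top μ (by linarith)).const_mul C'
      simpa using this
    have hbot : Tendsto u atBot (𝓝 0) := by
      apply squeeze_zero_norm hdec
      have := (sech_rpow_tendsto_bot μ (by linarith)).const_mul C'
      simpa using this
    have hle := nonpos_of_decay q hq1 u u1 hu hu1 htop hbot
    have hge := nonpos_of_decay q hq1 (fun t => -u t) (fun t => -u1 t)
      (fun t => (hu t).neg)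
      (fun t => by
        have := (hu1 t).neg
        refine this.congr_deriv ?_
        ring)
      (by simpa using htop.neg) (by simpa using hbot.neg)
    intro t
    have h1 := hle t
    have h2 := hge t
    simp only [neg_nonpos] at h2
    linarith

/-- Differentiation under the interval integral sign. -/
lemma hasDerivAt_param (f f' : ℝ → ℝ → ℝ)
    (hf' : ∀ θ t, HasDerivAt (fun s => f s θ) (f' t θ) t)
    (hfc : Continuous (fun p : ℝ × ℝ => f p.1 p.2))
    (hf'c : Continuous (fun p : ℝ × ℝ => f' p.1 p.2))
    (g : ℝ → ℝ) (hg : Continuous g) (t0 : ℝ) :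
    HasDerivAt (fun t => ∫ θ in (-π)..π, f t θ * g θ)
      (∫ θ in (-π)..π, f' t0 θ * g θ) t0 := by
  have hK : IsCompact (Icc (t0 - 1) (t0 + 1) ×ˢ uIcc (-π) π) :=
    isCompact_Icc.prod isCompact_uIcc
  obtain ⟨M, hM⟩ := hK.exists_bound_of_continuousOn hf'c.continuousOn
  have key := intervalIntegral.hasDerivAt_integral_of_dominated_loc_of_deriv_le
    (F := fun t θ => f t θ * g θ) (F' := fun t θ => f' t θ * g θ)
    (a := -π) (b := π) (μ := volume) (x₀ := t0)
    (bound := fun θ => M * |g θ|)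
    (Metric.ball_mem_nhds t0 one_pos)
    (Eventually.of_forall fun x =>
      ((hfc.comp (continuous_const.prodMk continuous_id)).mul hg).aestronglyMeasurable)
    (((hfc.comp (continuous_const.prodMk continuous_id)).mul hg).intervalIntegrable _ _)
    (((hf'c.comp (continuous_const.prodMk continuous_id)).mul hg).aestronglyMeasurable)
    (ae_of_all _ fun θ hθ x hx => by
      have hxI : (x, θ) ∈ Icc (t0 - 1) (t0 + 1) ×ˢ uIcc (-π) π := by
        constructor
        · have hd : |x - t0| < 1 := by simpa [Real.dist_eq] using Metric.mem_ball.mp hx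
          have := abs_lt.mp hd
          exact ⟨by linarith [this.1], by linarith [this.2]⟩
        · exact uIoc_subset_uIcc hθ
      have := hM (x, θ) hxI
      calc ‖f' x θ * g θ‖ = ‖f' x θ‖ * ‖g θ‖ := norm_mul _ _
        _ ≤ M * |g θ| := by
            apply mul_le_mul_of_nonneg_right _ (abs_nonneg _)
            simpa using this)
    ((continuous_const.mul hg.abs).intervalIntegrable _ _)
    (ae_of_all _ fun θ hθ x hx => (hf' θ x).mul_const (g θ))
  exact key.2

lemma periodic_deriv' (h h1 : ℝ → ℝ) (hh : ∀ θ, HasDerivAt h (h1 θ) θ)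
    (hp : Function.Periodic h (2 * π)) : Function.Periodic h1 (2 * π) := by
  intro x
  have h2 : HasDerivAt (fun θ => h (θ + 2 * π)) (h1 (x + 2 * π)) x := by
    have := (hh (x + 2 * π)).comp x ((hasDerivAt_id x).add_const (2 * π))
    simpa [Function.comp_def] using this
  have h3 : (fun θ => h (θ + 2 * π)) = h := funext fun θ => hp θ
  rw [h3] at h2
  exact h2.unique (hh x)

lemma parts_twice (h h1 h2 g g1 g2 : ℝ → ℝ)
    (hh : ∀ θ, HasDerivAt h (h1 θ) θ) (hh1 : ∀ θ, HasDerivAt h1 (h2 θ) θ)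
    (hg : ∀ θ, HasDerivAt g (g1 θ) θ) (hg1 : ∀ θ, HasDerivAt g1 (g2 θ) θ)
    (hch1 : Continuous h1) (hch2 : Continuous h2)
    (hcg1 : Continuous g1) (hcg2 : Continuous g2)
    (hbh : h π = h (-π)) (hbh1 : h1 π = h1 (-π))
    (hbg : g π = g (-π)) (hbg1 : g1 π = g1 (-π)) :
    ∫ θ in (-π)..π, h2 θ * g θ = ∫ θ in (-π)..π, h θ * g2 θ := by
  have hch : Continuous h := continuous_iff_continuousAt.2 fun t => (hh t).continuousAt
  have hcg : Continuous g := continuous_iff_continuousAt.2 fun t => (hg t).continuousAt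
  have step1 : ∫ θ in (-π)..π, g θ * h2 θ
      = g π * h1 π - g (-π) * h1 (-π) - ∫ θ in (-π)..π, g1 θ * h1 θ := by
    apply integral_mul_deriv_eq_deriv_mul
      (fun x _ => hg x) (fun x _ => hh1 x)
      (hcg1.intervalIntegrable _ _) (hch2.intervalIntegrable _ _)
  have step2 : ∫ θ in (-π)..π, g1 θ * h1 θ
      = g1 π * h π - g1 (-π) * h (-π) - ∫ θ in (-π)..π, g2 θ * h θ := by
    apply integral_mul_deriv_eq_deriv_mul
      (fun x _ => hg1 x) (fun x _ => hh x)
      (hcg2.intervalIntegrable _ _) (hch1.intervalIntegrable _ _)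
  have e1 : ∫ θ in (-π)..π, h2 θ * g θ = ∫ θ in (-π)..π, g θ * h2 θ := by
    apply intervalIntegral.integral_congr; intro x _; exact mul_comm _ _
  have e2 : ∫ θ in (-π)..π, h θ * g2 θ = ∫ θ in (-π)..π, g2 θ * h θ := by
    apply intervalIntegral.integral_congr; intro x _; exact mul_comm _ _
  rw [e1, e2, step1, step2, hbh, hbh1, hbg, hbg1]
  ring

lemma fourier_vanish (f : ℝ → ℝ) (hf : Continuous f) (hp : Function.Periodic f (2 * π))
    (hcos : ∀ n : ℤ, ∫ θ in (-π)..π, f θ * Real.cos (n * θ) = 0)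
    (hsin : ∀ n : ℤ, ∫ θ in (-π)..π, f θ * Real.sin (n * θ) = 0) :
    ∀ θ : ℝ, f θ = 0 := by
  haveI : Fact (0 < 2 * π) := ⟨by positivity⟩
  have hpc : Function.Periodic (fun x : ℝ => (f x : ℂ)) (2 * π) := fun x => by
    simp [hp x]
  set F : AddCircle (2 * π) → ℂ := hpc.lift with hF
  have hFcont : Continuous F := Continuous.quotient_liftOn' (by continuity) _
  have hFcoe : ∀ x : ℝ, F ↑x = (f x : ℂ) := fun x => Function.Periodic.lift_coe hpc x
  have hcoeff : ∀ n : ℤ, fourierCoeff F n = 0 := by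
    intro n
    rw [fourierCoeff_eq_intervalIntegral F n (-π)]
    have hend : -π + 2 * π = π := by ring
    rw [hend]
    have hint : ∀ x : ℝ, (fourier (-n) (x : AddCircle (2 * π))) • F ↑x
        = ((f x * Real.cos (n * x) : ℝ) : ℂ) + ((-(f x * Real.sin (n * x)) : ℝ) : ℂ) * Complex.I := by
      intro x
      rw [hFcoe x, fourier_coe_apply, smul_eq_mul]
      have h2π : (2 * (π:ℂ)) ≠ 0 := by
        simp [Real.pi_ne_zero]
      have harg : (2 * (π:ℂ) * Complex.I * ((-n : ℤ) : ℂ) * (x : ℂ) / ((2 * π : ℝ) : ℂ))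
          = ((-(n * x) : ℝ) : ℂ) * Complex.I := by
        push_cast
        field_simp
      rw [harg, Complex.exp_mul_I]
      rw [← Complex.ofReal_cos, ← Complex.ofReal_sin]
      rw [Real.cos_neg, Real.sin_neg]
      push_cast
      ring
    rw [intervalIntegral.integral_congr (fun x _ => hint x)]
    rw [intervalIntegral.integral_add
      (by apply Continuous.intervalIntegrable; continuity)
      (by apply Continuous.intervalIntegrable; continuity)]
    have e1 : ∫ x in (-π)..π, ((f x * Real.cos (n * x) : ℝ) : ℂ)
        = ((∫ x in (-π)..π, f x * Real.cos (n * x) : ℝ) : ℂ) :=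
      intervalIntegral.integral_ofReal
    have e2 : ∫ x in (-π)..π, ((-(f x * Real.sin (n * x)) : ℝ) : ℂ) * Complex.I
        = ((∫ x in (-π)..π, -(f x * Real.sin (n * x)) : ℝ) : ℂ) * Complex.I := by
      rw [intervalIntegral.integral_mul_const]
      congr 1
      exact intervalIntegral.integral_ofReal
    rw [e1, e2, hcos n]
    rw [intervalIntegral.integral_neg, hsin n]
    simp
  set Fc : C(AddCircle (2 * π), ℂ) := ⟨F, hFcont⟩ with hFc
  set X := ContinuousMap.toLp (E := ℂ) 2 haarAddCircle ℂ Fc with hX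
  have hrepr : fourierBasis.repr X = 0 := by
    ext n
    rw [fourierBasis_repr, fourierCoeff_toLp]
    rw [show (⇑Fc) = F from rfl]
    simpa using hcoeff n
  have hX0 : X = 0 := fourierBasis.repr.injective (by rw [hrepr, map_zero])
  have hFc0 : Fc = 0 := ContinuousMap.toLp_injective haarAddCircle hX0
  intro θ
  have : F ↑θ = 0 := by
    have := congrArg (fun g : C(AddCircle (2 * π), ℂ) => g ↑θ) hFc0
    show Fc ↑θ = 0
    simpa using this
  rw [hFcoe θ] at this
  exact_mod_cast this

lemma hasDerivAt_fst (Ψ : ℝ × ℝ → ℝ) (h : Differentiable ℝ Ψ) (t θ : ℝ) :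
    HasDerivAt (fun s => Ψ (s, θ)) (fderiv ℝ Ψ (t, θ) (1, 0)) t :=
  (h (t, θ)).hasFDerivAt.comp_hasDerivAt t ((hasDerivAt_id t).prodMk (hasDerivAt_const t θ))

lemma hasDerivAt_snd (Ψ : ℝ × ℝ → ℝ) (h : Differentiable ℝ Ψ) (t θ : ℝ) :
    HasDerivAt (fun s => Ψ (t, s)) (fderiv ℝ Ψ (t, θ) (0, 1)) θ :=
  (h (t, θ)).hasFDerivAt.comp_hasDerivAt θ ((hasDerivAt_const θ t).prodMk (hasDerivAt_id θ))

lemma coeff_vanish (μ C : ℝ) (hμ : 1 < μ) (φ : ℝ → ℝ → ℝ)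
    (hreg : ContDiff ℝ 2 (fun p : ℝ × ℝ => φ p.1 p.2))
    (hper : ∀ t, Function.Periodic (fun θ => φ t θ) (2 * π))
    (heven : ∀ t θ, φ (-t) θ = φ t θ)
    (hpde : ∀ t θ, dt (dt φ) t θ + dth (dth φ) t θ + 2 * (1 / Real.cosh t) ^ 2 * φ t θ = 0)
    (hdecay : ∀ t θ, |φ t θ| ≤ C * (1 / Real.cosh t) ^ μ)
    (c : ℝ) (hc : c = 0 ∨ c = 1 ∨ 4 ≤ c)
    (g g1 : ℝ → ℝ)
    (hg : ∀ θ, HasDerivAt g (g1 θ) θ)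
    (hg1 : ∀ θ, HasDerivAt g1 (-c * g θ) θ)
    (hcg1 : Continuous g1)
    (hgb : ∀ θ, |g θ| ≤ 1)
    (hgB : g π = g (-π)) (hg1B : g1 π = g1 (-π)) :
    ∀ t, (∫ θ in (-π)..π, φ t θ * g θ) = 0 := by
  have hcg : Continuous g := continuous_iff_continuousAt.2 fun x => (hg x).continuousAt
  have hcg2 : Continuous (fun θ => -c * g θ) := continuous_const.mul hcg
  set Φ : ℝ × ℝ → ℝ := fun p => φ p.1 p.2 with hΦ
  have hΦd : Differentiable ℝ Φ := hreg.differentiable (by norm_num)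
  have hG : ContDiff ℝ 1 (fderiv ℝ Φ) := hreg.fderiv_right (by norm_num)
  set φt : ℝ × ℝ → ℝ := fun p => fderiv ℝ Φ p (1, 0) with hφtdef
  set φθ : ℝ × ℝ → ℝ := fun p => fderiv ℝ Φ p (0, 1) with hφθdef
  have hφt : ContDiff ℝ 1 φt := hG.clm_apply contDiff_const
  have hφθ : ContDiff ℝ 1 φθ := hG.clm_apply contDiff_const
  set φtt : ℝ × ℝ → ℝ := fun p => fderiv ℝ φt p (1, 0) with hφttdef
  set φθθ : ℝ × ℝ → ℝ := fun p => fderiv ℝ φθ p (0, 1) with hφθθdef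
  have hφtt : Continuous φtt :=
    ((hφt.fderiv_right (m := 0) (by norm_num)).clm_apply contDiff_const).continuous
  have hφθθ : Continuous φθθ :=
    ((hφθ.fderiv_right (m := 0) (by norm_num)).clm_apply contDiff_const).continuous
  -- identifications of partial derivatives
  have hD1 : ∀ t θ, HasDerivAt (fun s => φ s θ) (φt (t, θ)) t := fun t θ =>
    hasDerivAt_fst Φ hΦd t θ
  have hD2 : ∀ t θ, HasDerivAt (fun s => φt (s, θ)) (φtt (t, θ)) t := fun t θ =>
    hasDerivAt_fst φt (hφt.differentiable one_ne_zero) t θ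
  have hD3 : ∀ t θ, HasDerivAt (fun s => φ t s) (φθ (t, θ)) θ := fun t θ =>
    hasDerivAt_snd Φ hΦd t θ
  have hD4 : ∀ t θ, HasDerivAt (fun s => φθ (t, s)) (φθθ (t, θ)) θ := fun t θ =>
    hasDerivAt_snd φθ (hφθ.differentiable one_ne_zero) t θ
  have hdt_eq : ∀ t θ, dt φ t θ = φt (t, θ) := fun t θ => (hD1 t θ).deriv
  have hdtt_eq : ∀ t θ, dt (dt φ) t θ = φtt (t, θ) := by
    intro t θ
    have h1 : (fun s => dt φ s θ) = (fun s => φt (s, θ)) := funext fun s => hdt_eq s θ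
    show deriv (fun s => dt φ s θ) t = _
    rw [h1]
    exact (hD2 t θ).deriv
  have hdth_eq : ∀ t θ, dth φ t θ = φθ (t, θ) := fun t θ => (hD3 t θ).deriv
  have hdthth_eq : ∀ t θ, dth (dth φ) t θ = φθθ (t, θ) := by
    intro t θ
    have h1 : (fun s => dth φ t s) = (fun s => φθ (t, s)) := funext fun s => hdth_eq t s
    show deriv (fun s => dth φ t s) θ = _
    rw [h1]
    exact (hD4 t θ).deriv
  have hpde' : ∀ t θ, φtt (t, θ) = -(φθθ (t, θ)) - 2 * ((Real.cosh t)⁻¹)^2 * φ t θ := by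
    intro t θ
    have := hpde t θ
    rw [hdtt_eq, hdthth_eq, one_div] at this
    linarith
  -- the Fourier coefficient and its derivatives
  set u : ℝ → ℝ := fun t => ∫ θ in (-π)..π, φ t θ * g θ with hudef
  set u1 : ℝ → ℝ := fun t => ∫ θ in (-π)..π, φt (t, θ) * g θ with hu1def
  have hu : ∀ t, HasDerivAt u (u1 t) t := by
    intro t
    exact hasDerivAt_param φ (fun t θ => φt (t, θ)) (fun θ t => hD1 t θ)
      hreg.continuous (by exact hφt.continuous) g hcg t
  have hu1 : ∀ t, HasDerivAt u1 ((c - 2 * ((Real.cosh t)⁻¹)^2) * u t) t := by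
    intro t
    have key := hasDerivAt_param (fun t θ => φt (t, θ)) (fun t θ => φtt (t, θ))
      (fun θ t => hD2 t θ) (by exact hφt.continuous) (by exact hφtt) g hcg t
    have hval : (∫ θ in (-π)..π, φtt (t, θ) * g θ)
        = (c - 2 * ((Real.cosh t)⁻¹)^2) * u t := by
      have hsplit : ∀ θ, φtt (t, θ) * g θ
          = -(φθθ (t, θ) * g θ) - (2 * ((Real.cosh t)⁻¹)^2) * (φ t θ * g θ) := by
        intro θ
        rw [hpde' t θ]; ring
      rw [intervalIntegral.integral_congr (fun θ _ => hsplit θ)]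
      have hcφθθ : Continuous (fun θ => φθθ (t, θ) * g θ) :=
        (hφθθ.comp (continuous_const.prodMk continuous_id)).mul hcg
      have hcφg : Continuous (fun θ => φ t θ * g θ) :=
        ((hreg.continuous.comp (continuous_const.prodMk continuous_id)).mul hcg)
      rw [intervalIntegral.integral_sub (f := fun θ => -(φθθ (t, θ) * g θ))
        (g := fun θ => 2 * ((Real.cosh t)⁻¹)^2 * (φ t θ * g θ)) (hcφθθ.neg.intervalIntegrable _ _)
        ((continuous_const.mul hcφg).intervalIntegrable _ _)]
      rw [intervalIntegral.integral_neg, intervalIntegral.integral_const_mul]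
      -- integration by parts
      have hparts : (∫ θ in (-π)..π, φθθ (t, θ) * g θ)
          = ∫ θ in (-π)..π, φ t θ * (-c * g θ) := by
        apply parts_twice (fun θ => φ t θ) (fun θ => φθ (t, θ)) (fun θ => φθθ (t, θ))
          g g1 (fun θ => -c * g θ) (hD3 t) (hD4 t) hg hg1
          (hφθ.continuous.comp (continuous_const.prodMk continuous_id))
          (hφθθ.comp (continuous_const.prodMk continuous_id))
          hcg1 hcg2
          (by have := hper t (-π); simp only at this
              rw [show -π + 2*π = π by ring] at this; exact this)
          (by have hp1 : Function.Periodic (fun θ => φθ (t, θ)) (2*π) :=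
                periodic_deriv' (fun θ => φ t θ) (fun θ => φθ (t, θ)) (hD3 t) (hper t)
              have := hp1 (-π)
              rw [show -π + 2*π = π by ring] at this; exact this)
          hgB hg1B
      rw [hparts]
      have : (∫ θ in (-π)..π, φ t θ * (-c * g θ)) = -c * u t := by
        rw [hudef]
        rw [← intervalIntegral.integral_const_mul]
        apply intervalIntegral.integral_congr
        intro x _; ring
      rw [this, hudef]
      ring
    rw [← hval]
    exact key
  -- evenness
  have hev : ∀ t, u (-t) = u t := by
    intro t
    apply intervalIntegral.integral_congr
    intro x _
    simp only [heven]
  -- decay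
  have hdec : ∀ t, |u t| ≤ (2 * π * C) * ((Real.cosh t)⁻¹) ^ μ := by
    intro t
    have hb : ∀ x ∈ uIoc (-π) π, ‖φ t x * g x‖ ≤ C * ((Real.cosh t)⁻¹) ^ μ := by
      intro x _
      rw [norm_mul]
      have h1 := hdecay t x
      rw [one_div] at h1
      calc ‖φ t x‖ * ‖g x‖ ≤ ‖φ t x‖ * 1 :=
            mul_le_mul_of_nonneg_left (hgb x) (norm_nonneg _)
        _ = |φ t x| := by rw [mul_one]; rfl
        _ ≤ C * ((Real.cosh t)⁻¹) ^ μ := h1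
    have := intervalIntegral.norm_integral_le_of_norm_le_const hb
    have habs : |π - -π| = 2 * π := by
      rw [sub_neg_eq_add, abs_of_pos (by positivity)]; ring
    rw [habs] at this
    calc |u t| ≤ C * ((Real.cosh t)⁻¹) ^ μ * (2 * π) := this
      _ = (2 * π * C) * ((Real.cosh t)⁻¹) ^ μ := by ring
  exact mode_vanish μ (2 * π * C) c hμ hc u u1 hu hu1 hev hdec


end S18

/-- Liouville-type nondegeneracy for the limit Jacobi operator. -/
theorem statement18 (μ C : ℝ) (hμ : μ ∈ Set.Ioo (1:ℝ) 2) (φ : ℝ → ℝ → ℝ)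
    (hreg : ContDiff ℝ 2 (fun p : ℝ × ℝ => φ p.1 p.2))
    (hper : ∀ t, Function.Periodic (fun θ => φ t θ) (2 * Real.pi))
    (heven : ∀ t θ, φ (-t) θ = φ t θ)
    (hsym : ∀ t θ, φ t (Real.pi / 2 - θ) = φ t (Real.pi / 2 + θ))
    (hpde : ∀ t θ, dt (dt φ) t θ + dth (dth φ) t θ
      + 2 * (1 / Real.cosh t) ^ 2 * φ t θ = 0)
    (hdecay : ∀ t θ, |φ t θ| ≤ C * (1 / Real.cosh t) ^ μ) :
    ∀ t θ, φ t θ = 0 := by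
  intro t θ
  have hft : Continuous (fun θ' => φ t θ') :=
    hreg.continuous.comp (continuous_const.prodMk continuous_id)
  refine S18.fourier_vanish (fun θ' => φ t θ') hft (hper t) ?_ ?_ θ
  · -- cosine coefficients vanish
    intro n
    have hc : ((n:ℝ)^2 = 0 ∨ (n:ℝ)^2 = 1 ∨ 4 ≤ (n:ℝ)^2) := by
      have h5 : n = 0 ∨ n = 1 ∨ n = -1 ∨ 2 ≤ n ∨ n ≤ -2 := by omega
      rcases h5 with h | h | h | h | h
      · left; rw [h]; norm_num
      · right; left; rw [h]; norm_num
      · right; left; rw [h]; norm_num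
      · right; right
        have : (2:ℝ) ≤ (n:ℝ) := by exact_mod_cast h
        nlinarith
      · right; right
        have : (n:ℝ) ≤ -2 := by exact_mod_cast h
        nlinarith
    have h0 : ∀ x : ℝ, HasDerivAt (fun y : ℝ => (n:ℝ) * y) ((n:ℝ)) x := by
      intro x
      simpa using (hasDerivAt_id x).const_mul ((n:ℝ))
    apply S18.coeff_vanish μ C hμ.1 φ hreg hper heven hpde hdecay ((n:ℝ)^2) hc
      (fun x => Real.cos ((n:ℝ) * x)) (fun x => -(n:ℝ) * Real.sin ((n:ℝ) * x))
    · intro x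
      have := (Real.hasDerivAt_cos ((n:ℝ) * x)).comp x (h0 x)
      refine this.congr_deriv ?_
      ring
    · intro x
      have := ((Real.hasDerivAt_sin ((n:ℝ) * x)).comp x (h0 x)).const_mul (-(n:ℝ))
      refine this.congr_deriv ?_
      ring
    · fun_prop
    · intro x; exact Real.abs_cos_le_one _
    · rw [mul_neg, Real.cos_neg]
    · rw [mul_neg, Real.sin_neg, Real.sin_int_mul_pi]; ring
  · -- sine coefficients vanish
    intro n
    have hc : ((n:ℝ)^2 = 0 ∨ (n:ℝ)^2 = 1 ∨ 4 ≤ (n:ℝ)^2) := by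
      have h5 : n = 0 ∨ n = 1 ∨ n = -1 ∨ 2 ≤ n ∨ n ≤ -2 := by omega
      rcases h5 with h | h | h | h | h
      · left; rw [h]; norm_num
      · right; left; rw [h]; norm_num
      · right; left; rw [h]; norm_num
      · right; right
        have : (2:ℝ) ≤ (n:ℝ) := by exact_mod_cast h
        nlinarith
      · right; right
        have : (n:ℝ) ≤ -2 := by exact_mod_cast h
        nlinarith
    have h0 : ∀ x : ℝ, HasDerivAt (fun y : ℝ => (n:ℝ) * y) ((n:ℝ)) x := by
      intro x
      simpa using (hasDerivAt_id x).const_mul ((n:ℝ))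
    apply S18.coeff_vanish μ C hμ.1 φ hreg hper heven hpde hdecay ((n:ℝ)^2) hc
      (fun x => Real.sin ((n:ℝ) * x)) (fun x => (n:ℝ) * Real.cos ((n:ℝ) * x))
    · intro x
      have := (Real.hasDerivAt_sin ((n:ℝ) * x)).comp x (h0 x)
      refine this.congr_deriv ?_
      ring
    · intro x
      have := ((Real.hasDerivAt_cos ((n:ℝ) * x)).comp x (h0 x)).const_mul ((n:ℝ))
      refine this.congr_deriv ?_
      ring
    · fun_prop
    · intro x; exact Real.abs_sin_le_one _
    · rw [mul_neg, Real.sin_neg, Real.sin_int_mul_pi]; ring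
    · rw [mul_neg, Real.cos_neg]

end
end
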